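/- Let A ∈ ℝ^{m×n}, B ∈ ℝ^{m×ℓ} and S ∈ ℝ^{r×m} be such that rank(SA) = rank(A), rank(SB) = rank(B), and all singular values of S U_A and of S U_B lie in [√(1−ε), √(1+ε)] for some 0 < ε < 1/2. Then for every i ≤ min(n,ℓ): |σ_i(U_A^T S^T S U_B) − σ_i(U_{SA}^T U_{SB})| ≤ 2ε(1+ε). -/

import Mathlib

open Matrix Module Submodule

theorem Matrix.isHermitian_transpose_mul_self {m n α : Type*} [CommSemiring α] [StarRing α]
    [TrivialStar α] [Fintype m] (A : Matrix m n α) : (Aᵀ * A).IsHermitian := by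
  rw [← conjTranspose_eq_transpose_of_trivial]
  exact isHermitian_conjTranspose_mul_self A

namespace SA

variable {N a b : ℕ}

lemma gramT (X : Matrix (Fin a) (Fin b) ℝ) (x : Fin b → ℝ) :
    (X *ᵥ x) ⬝ᵥ (X *ᵥ x) = x ⬝ᵥ ((Xᵀ * X) *ᵥ x) := by
  conv_rhs => rw [← mulVec_mulVec, dotProduct_mulVec x, vecMul_transpose]

lemma gramH (X : Matrix (Fin a) (Fin b) ℝ) (x : Fin b → ℝ) :
    x ⬝ᵥ ((Xᴴ * X) *ᵥ x) = (X *ᵥ x) ⬝ᵥ (X *ᵥ x) := by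
  rw [conjTranspose_eq_transpose_of_trivial, ← gramT]

lemma dp_self_nonneg (x : Fin a → ℝ) : 0 ≤ x ⬝ᵥ x :=
  Finset.sum_nonneg fun i _ => mul_self_nonneg _

lemma dp_self_pos {x : Fin a → ℝ} (hx : x ≠ 0) : 0 < x ⬝ᵥ x := by
  rcases (dp_self_nonneg x).lt_or_eq with h | h
  · exact h
  · exact absurd (dotProduct_self_eq_zero.mp h.symm) hx

/-- The submodule of vectors supported on `s`. -/
def coordSub (s : Finset (Fin N)) : Submodule ℝ (Fin N → ℝ) where
  carrier := {x | ∀ j ∉ s, x j = 0}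
  add_mem' := fun hx hy j hj => by simp [hx j hj, hy j hj]
  zero_mem' := fun j _ => rfl
  smul_mem' := fun c x hx j hj => by simp [hx j hj]

lemma mem_coordSub {s : Finset (Fin N)} {x : Fin N → ℝ} :
    x ∈ coordSub s ↔ ∀ j ∉ s, x j = 0 := Iff.rfl

noncomputable def coordEquiv (s : Finset (Fin N)) : coordSub s ≃ₗ[ℝ] (s → ℝ) where
  toFun x j := x.1 j
  map_add' x y := rfl
  map_smul' c x := rfl
  invFun v := ⟨fun j => if h : j ∈ s then v ⟨j, h⟩ else 0, fun j hj => dif_neg hj⟩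
  left_inv x := by
    ext j
    by_cases h : j ∈ s
    · simp [h]
    · simp [h, x.2 j h]
  right_inv v := by ext j; simp

lemma finrank_coordSub (s : Finset (Fin N)) : finrank ℝ (coordSub s) = s.card := by
  rw [LinearEquiv.finrank_eq (coordEquiv s), finrank_pi, Fintype.card_coe]


section Spectral

variable {H : Matrix (Fin N) (Fin N) ℝ} (hH : H.IsHermitian)

/-- ascending sorted eigenvalues -/
noncomputable def asc (hH : H.IsHermitian) (t : Fin N) : ℝ :=
  hH.eigenvalues (Tuple.sort hH.eigenvalues t)

lemma asc_mono : Monotone (asc hH) := Tuple.monotone_sort hH.eigenvalues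

/-- coefficient vector -/
noncomputable def coeffs (hH : H.IsHermitian) (x : Fin N → ℝ) : Fin N → ℝ :=
  (star (hH.eigenvectorUnitary : Matrix (Fin N) (Fin N) ℝ)) *ᵥ x

lemma qf_eq_sum (x : Fin N → ℝ) :
    x ⬝ᵥ (H *ᵥ x) = ∑ j, hH.eigenvalues j * (coeffs hH x j)^2 := by
  set W : Matrix (Fin N) (Fin N) ℝ := ↑hH.eigenvectorUnitary with hWdef
  have hsW : star W = Wᵀ := by
    rw [star_eq_conjTranspose, conjTranspose_eq_transpose_of_trivial]
  have h1 : H = W * diagonal hH.eigenvalues * Wᵀ := by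
    have := hH.spectral_theorem
    rw [Unitary.conjStarAlgAut_apply] at this
    rw [← hsW]
    simpa [hWdef, Function.comp, RCLike.ofReal_real_eq_id] using this
  have h2 : coeffs hH x = Wᵀ *ᵥ x := by rw [coeffs, ← hWdef, hsW]
  conv_lhs => rw [h1, ← mulVec_mulVec, ← mulVec_mulVec, dotProduct_mulVec x,
    ← mulVec_transpose]
  rw [← h2]
  simp only [dotProduct, mulVec_diagonal]
  exact Finset.sum_congr rfl fun j _ => by ring

lemma dp_coeffs (x : Fin N → ℝ) : coeffs hH x ⬝ᵥ coeffs hH x = x ⬝ᵥ x := by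
  set W : Matrix (Fin N) (Fin N) ℝ := ↑hH.eigenvectorUnitary with hWdef
  have hsW : star W = Wᵀ := by
    rw [star_eq_conjTranspose, conjTranspose_eq_transpose_of_trivial]
  have hW : W * star W = 1 := mem_unitaryGroup_iff.mp hH.eigenvectorUnitary.2
  have h2 : coeffs hH x = Wᵀ *ᵥ x := by rw [coeffs, ← hWdef, hsW]
  rw [h2, gramT, transpose_transpose, ← hsW, hW, one_mulVec]

lemma dp_eq_sum_coeffs (x : Fin N → ℝ) : x ⬝ᵥ x = ∑ j, (coeffs hH x j)^2 := by
  rw [← dp_coeffs hH x]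
  exact Finset.sum_congr rfl fun j _ => (sq _).symm

/-- the coefficient map is bijective -/
lemma coeffs_injective : Function.Injective (coeffs hH) := by
  intro x y hxy
  set W : Matrix (Fin N) (Fin N) ℝ := ↑hH.eigenvectorUnitary with hWdef
  have hW : W * star W = 1 := mem_unitaryGroup_iff.mp hH.eigenvectorUnitary.2
  have key : ∀ z : Fin N → ℝ, W *ᵥ coeffs hH z = z := by
    intro z
    rw [coeffs, ← hWdef, mulVec_mulVec, hW, one_mulVec]
  rw [← key x, ← key y, hxy]

/-- The subspace attached to a coefficient-support set. -/
noncomputable def eigSub (hH : H.IsHermitian) (s : Finset (Fin N)) :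
    Submodule ℝ (Fin N → ℝ) :=
  Submodule.comap (mulVecLin (star (hH.eigenvectorUnitary : Matrix (Fin N) (Fin N) ℝ)))
    (coordSub s)

lemma mem_eigSub {s : Finset (Fin N)} {x : Fin N → ℝ} :
    x ∈ eigSub hH s ↔ ∀ j ∉ s, coeffs hH x j = 0 := Iff.rfl

lemma finrank_eigSub (s : Finset (Fin N)) : finrank ℝ (eigSub hH s) = s.card := by
  set f := mulVecLin (star (hH.eigenvectorUnitary : Matrix (Fin N) (Fin N) ℝ))
  have hinj : Function.Injective f := coeffs_injective hH
  have hbij : Function.Bijective f :=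
    ⟨hinj, (LinearMap.injective_iff_surjective).mp hinj⟩
  set e := LinearEquiv.ofBijective f hbij
  have : eigSub hH s = Submodule.comap (e : (Fin N → ℝ) →ₗ[ℝ] (Fin N → ℝ)) (coordSub s) := rfl
  rw [this, Submodule.comap_equiv_eq_map_symm, LinearEquiv.finrank_map_eq, finrank_coordSub]

end Spectral

section CF

variable {H : Matrix (Fin N) (Fin N) ℝ} (hH : H.IsHermitian) (t : Fin N)

lemma cf_exists_lower : ∃ V : Submodule ℝ (Fin N → ℝ), finrank ℝ V = N - t ∧
    ∀ x ∈ V, asc hH t * (x ⬝ᵥ x) ≤ x ⬝ᵥ (H *ᵥ x) := by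
  refine ⟨eigSub hH ((Finset.Ici t).image (Tuple.sort hH.eigenvalues)), ?_, ?_⟩
  · rw [finrank_eigSub, Finset.card_image_of_injective _ (Tuple.sort hH.eigenvalues).injective,
      Fin.card_Ici]
  · intro x hx
    rw [qf_eq_sum hH, dp_eq_sum_coeffs hH, Finset.mul_sum]
    refine Finset.sum_le_sum fun j _ => ?_
    by_cases hj : j ∈ (Finset.Ici t).image (Tuple.sort hH.eigenvalues)
    · obtain ⟨i2, hi2, rfl⟩ := Finset.mem_image.mp hj
      have h := asc_mono hH (Finset.mem_Ici.mp hi2)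
      exact mul_le_mul_of_nonneg_right h (sq_nonneg _)
    · rw [mem_eigSub] at hx
      rw [hx j hj]; simp

lemma cf_exists_upper : ∃ U : Submodule ℝ (Fin N → ℝ), finrank ℝ U = t + 1 ∧
    ∀ x ∈ U, x ⬝ᵥ (H *ᵥ x) ≤ asc hH t * (x ⬝ᵥ x) := by
  refine ⟨eigSub hH ((Finset.Iic t).image (Tuple.sort hH.eigenvalues)), ?_, ?_⟩
  · rw [finrank_eigSub, Finset.card_image_of_injective _ (Tuple.sort hH.eigenvalues).injective,
      Fin.card_Iic]
  · intro x hx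
    rw [qf_eq_sum hH, dp_eq_sum_coeffs hH, Finset.mul_sum]
    refine Finset.sum_le_sum fun j _ => ?_
    by_cases hj : j ∈ (Finset.Iic t).image (Tuple.sort hH.eigenvalues)
    · obtain ⟨i2, hi2, rfl⟩ := Finset.mem_image.mp hj
      have h := asc_mono hH (Finset.mem_Iic.mp hi2)
      exact mul_le_mul_of_nonneg_right h (sq_nonneg _)
    · rw [mem_eigSub] at hx
      rw [hx j hj]; simp

lemma cf_le (V : Submodule ℝ (Fin N → ℝ)) (hdim : N ≤ finrank ℝ V + t) (c : ℝ)
    (hc : ∀ x ∈ V, c * (x ⬝ᵥ x) ≤ x ⬝ᵥ (H *ᵥ x)) : c ≤ asc hH t := by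
  obtain ⟨U, hU, hUq⟩ := cf_exists_upper hH t
  have h1 := Submodule.finrank_sup_add_finrank_inf_eq V U
  have h2 : finrank ℝ (V ⊔ U : Submodule ℝ (Fin N → ℝ)) ≤ N := by
    simpa [Module.finrank_fin_fun] using (V ⊔ U).finrank_le
  have ht := t.isLt
  have h3 : finrank ℝ (V ⊓ U : Submodule ℝ (Fin N → ℝ)) ≠ 0 := by omega
  obtain ⟨x, hxVU, hx0⟩ := Submodule.exists_mem_ne_zero_of_ne_bot
    (p := V ⊓ U) (fun hbot => h3 (by rw [hbot]; simp))
  have hxx : 0 < x ⬝ᵥ x := dp_self_pos hx0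
  have hchain := (hc x hxVU.1).trans (hUq x hxVU.2)
  exact (mul_le_mul_iff_of_pos_right hxx).mp hchain

lemma cf_ge (U : Submodule ℝ (Fin N → ℝ)) (hdim : (t : ℕ) + 1 ≤ finrank ℝ U) (c : ℝ)
    (hc : ∀ x ∈ U, x ⬝ᵥ (H *ᵥ x) ≤ c * (x ⬝ᵥ x)) : asc hH t ≤ c := by
  obtain ⟨V, hV, hVq⟩ := cf_exists_lower hH t
  have h1 := Submodule.finrank_sup_add_finrank_inf_eq U V
  have h2 : finrank ℝ (U ⊔ V : Submodule ℝ (Fin N → ℝ)) ≤ N := by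
    simpa [Module.finrank_fin_fun] using (U ⊔ V).finrank_le
  have ht := t.isLt
  have h3 : finrank ℝ (U ⊓ V : Submodule ℝ (Fin N → ℝ)) ≠ 0 := by omega
  obtain ⟨x, hxUV, hx0⟩ := Submodule.exists_mem_ne_zero_of_ne_bot
    (p := U ⊓ V) (fun hbot => h3 (by rw [hbot]; simp))
  have hxx : 0 < x ⬝ᵥ x := dp_self_pos hx0
  have hchain := (hVq x hxUV.2).trans (hc x hxUV.1)
  exact (mul_le_mul_iff_of_pos_right hxx).mp hchain

end CF

lemma form_of_eig_bounds {G : Matrix (Fin N) (Fin N) ℝ} (hG : G.IsHermitian) (a b : ℝ)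
    (hab : ∀ j, a ≤ hG.eigenvalues j ∧ hG.eigenvalues j ≤ b) (x : Fin N → ℝ) :
    a * (x ⬝ᵥ x) ≤ x ⬝ᵥ (G *ᵥ x) ∧ x ⬝ᵥ (G *ᵥ x) ≤ b * (x ⬝ᵥ x) := by
  rw [qf_eq_sum hG, dp_eq_sum_coeffs hG, Finset.mul_sum, Finset.mul_sum]
  constructor
  · exact Finset.sum_le_sum fun j _ =>
      mul_le_mul_of_nonneg_right (hab j).1 (sq_nonneg _)
  · exact Finset.sum_le_sum fun j _ =>
      mul_le_mul_of_nonneg_right (hab j).2 (sq_nonneg _)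

lemma asc_sandwich {H1 H2 : Matrix (Fin N) (Fin N) ℝ} (hH1 : H1.IsHermitian)
    (hH2 : H2.IsHermitian) (h2nn : ∀ u, 0 ≤ asc hH2 u)
    (R : Matrix (Fin N) (Fin N) ℝ) (α β : ℝ) (hα : 0 < α) (hβ : 0 ≤ β)
    (hRl : ∀ x, α * (x ⬝ᵥ x) ≤ (R *ᵥ x) ⬝ᵥ (R *ᵥ x))
    (hRu : ∀ x, (R *ᵥ x) ⬝ᵥ (R *ᵥ x) ≤ β * (x ⬝ᵥ x))
    (hql : ∀ x, α * ((R *ᵥ x) ⬝ᵥ (H2 *ᵥ (R *ᵥ x))) ≤ x ⬝ᵥ (H1 *ᵥ x))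
    (hqu : ∀ x, x ⬝ᵥ (H1 *ᵥ x) ≤ β * ((R *ᵥ x) ⬝ᵥ (H2 *ᵥ (R *ᵥ x))))
    (t : Fin N) :
    α * α * asc hH2 t ≤ asc hH1 t ∧ asc hH1 t ≤ β * β * asc hH2 t := by
  have hinj : Function.Injective R.mulVecLin := by
    rw [← LinearMap.ker_eq_bot, LinearMap.ker_eq_bot']
    intro x hx
    by_contra h0
    have h1 := hRl x
    rw [mulVecLin_apply] at hx
    rw [hx] at h1
    simp only [dotProduct, Pi.zero_apply, mul_zero, Finset.sum_const_zero] at h1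
    exact absurd h1 (not_le.mpr (mul_pos hα (dp_self_pos h0)))
  have hbij : Function.Bijective R.mulVecLin :=
    ⟨hinj, (LinearMap.injective_iff_surjective).mp hinj⟩
  set e := LinearEquiv.ofBijective R.mulVecLin hbij with he
  have ht := t.isLt
  constructor
  · obtain ⟨V, hV, hVq⟩ := cf_exists_lower hH2 t
    refine cf_le hH1 t (Submodule.comap (e : (Fin N → ℝ) →ₗ[ℝ] (Fin N → ℝ)) V) ?_ _ ?_
    · rw [Submodule.comap_equiv_eq_map_symm, LinearEquiv.finrank_map_eq, hV]; omega
    · intro x hx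
      have hmem : R *ᵥ x ∈ V := by
        simpa [he, mulVecLin_apply] using Submodule.mem_comap.mp hx
      have s1 := hVq _ hmem
      have s2 := hRl x
      calc α * α * asc hH2 t * (x ⬝ᵥ x)
          = α * (asc hH2 t * (α * (x ⬝ᵥ x))) := by ring
        _ ≤ α * (asc hH2 t * ((R *ᵥ x) ⬝ᵥ (R *ᵥ x))) :=
            mul_le_mul_of_nonneg_left (mul_le_mul_of_nonneg_left s2 (h2nn t)) hα.le
        _ ≤ α * ((R *ᵥ x) ⬝ᵥ (H2 *ᵥ (R *ᵥ x))) := mul_le_mul_of_nonneg_left s1 hα.le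
        _ ≤ x ⬝ᵥ (H1 *ᵥ x) := hql x
  · obtain ⟨U, hU, hUq⟩ := cf_exists_upper hH2 t
    refine cf_ge hH1 t (Submodule.comap (e : (Fin N → ℝ) →ₗ[ℝ] (Fin N → ℝ)) U) ?_ _ ?_
    · rw [Submodule.comap_equiv_eq_map_symm, LinearEquiv.finrank_map_eq, hU]
    · intro x hx
      have hmem : R *ᵥ x ∈ U := by
        simpa [he, mulVecLin_apply] using Submodule.mem_comap.mp hx
      have s1 := hUq _ hmem
      have s2 := hRu x
      calc x ⬝ᵥ (H1 *ᵥ x) ≤ β * ((R *ᵥ x) ⬝ᵥ (H2 *ᵥ (R *ᵥ x))) := hqu x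
        _ ≤ β * (asc hH2 t * ((R *ᵥ x) ⬝ᵥ (R *ᵥ x))) := mul_le_mul_of_nonneg_left s1 hβ
        _ ≤ β * (asc hH2 t * (β * (x ⬝ᵥ x))) :=
            mul_le_mul_of_nonneg_left (mul_le_mul_of_nonneg_left s2 (h2nn t)) hβ
        _ = β * β * asc hH2 t * (x ⬝ᵥ x) := by ring

lemma asc_le_one {D : Matrix (Fin N) (Fin N) ℝ} (hD : D.IsHermitian)
    (h : ∀ x : Fin N → ℝ, x ⬝ᵥ (D *ᵥ x) ≤ x ⬝ᵥ x) (t : Fin N) : asc hD t ≤ 1 := by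
  refine cf_ge hD t ⊤ ?_ 1 fun x _ => by simpa using h x
  have ht := t.isLt
  simp [finrank_top, Module.finrank_fin_fun]

lemma cs (u v : Fin a → ℝ) : (u ⬝ᵥ v)^2 ≤ (u ⬝ᵥ u) * (v ⬝ᵥ v) := by
  have h := Finset.sum_mul_sq_le_sq_mul_sq Finset.univ u v
  simpa [dotProduct, sq] using h

lemma eq_of_mulVec_eq {A B : Matrix (Fin a) (Fin b) ℝ} (h : ∀ v, A *ᵥ v = B *ᵥ v) :
    A = B := by
  ext i j
  have := congrFun (h (Pi.single j 1)) i
  simpa [mulVec_single] using this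

/-- form bounds transfer to the transpose for square matrices -/
lemma transpose_form_bounds {R : Matrix (Fin N) (Fin N) ℝ} {α β : ℝ} (hα : 0 < α) (hβ : 0 ≤ β)
    (hRl : ∀ x, α * (x ⬝ᵥ x) ≤ (R *ᵥ x) ⬝ᵥ (R *ᵥ x))
    (hRu : ∀ x, (R *ᵥ x) ⬝ᵥ (R *ᵥ x) ≤ β * (x ⬝ᵥ x)) :
    (∀ z, α * (z ⬝ᵥ z) ≤ (Rᵀ *ᵥ z) ⬝ᵥ (Rᵀ *ᵥ z)) ∧
    (∀ z, (Rᵀ *ᵥ z) ⬝ᵥ (Rᵀ *ᵥ z) ≤ β * (z ⬝ᵥ z)) := by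
  have hinj : Function.Injective R.mulVecLin := by
    rw [← LinearMap.ker_eq_bot, LinearMap.ker_eq_bot']
    intro x hx
    by_contra h0
    have h1 := hRl x
    rw [mulVecLin_apply] at hx
    rw [hx] at h1
    simp only [dotProduct, Pi.zero_apply, mul_zero, Finset.sum_const_zero] at h1
    exact absurd h1 (not_le.mpr (mul_pos hα (dp_self_pos h0)))
  have hsurj := (LinearMap.injective_iff_surjective).mp hinj
  constructor
  · intro z
    obtain ⟨u, hu⟩ := hsurj z
    rw [mulVecLin_apply] at hu
    have h1 : z ⬝ᵥ z = (Rᵀ *ᵥ z) ⬝ᵥ u := by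
      rw [mulVec_transpose, ← dotProduct_mulVec, hu]
    have h2 : ((Rᵀ *ᵥ z) ⬝ᵥ u)^2 ≤ ((Rᵀ *ᵥ z) ⬝ᵥ (Rᵀ *ᵥ z)) * (u ⬝ᵥ u) := cs _ _
    have h3 : α * (u ⬝ᵥ u) ≤ z ⬝ᵥ z := by
      have := hRl u
      rwa [hu] at this
    -- α * (z⬝z)^2 ≤ (Rᵀz⬝Rᵀz) * (α * (u⬝u)) ≤ (Rᵀz⬝Rᵀz) * (z⬝z)
    rcases eq_or_lt_of_le (dp_self_nonneg z) with h0 | h0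
    · rw [← h0]
      simpa using dp_self_nonneg (Rᵀ *ᵥ z)
    · have h4 : α * (z ⬝ᵥ z)^2 ≤ ((Rᵀ *ᵥ z) ⬝ᵥ (Rᵀ *ᵥ z)) * (z ⬝ᵥ z) := by
        calc α * (z ⬝ᵥ z)^2 = α * ((Rᵀ *ᵥ z) ⬝ᵥ u)^2 := by rw [← h1]
          _ ≤ α * (((Rᵀ *ᵥ z) ⬝ᵥ (Rᵀ *ᵥ z)) * (u ⬝ᵥ u)) := by
              exact mul_le_mul_of_nonneg_left h2 hα.le
          _ = ((Rᵀ *ᵥ z) ⬝ᵥ (Rᵀ *ᵥ z)) * (α * (u ⬝ᵥ u)) := by ring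
          _ ≤ ((Rᵀ *ᵥ z) ⬝ᵥ (Rᵀ *ᵥ z)) * (z ⬝ᵥ z) := by
              exact mul_le_mul_of_nonneg_left h3 (dp_self_nonneg _)
      have h5 : (α * (z ⬝ᵥ z)) * (z ⬝ᵥ z) ≤ ((Rᵀ *ᵥ z) ⬝ᵥ (Rᵀ *ᵥ z)) * (z ⬝ᵥ z) := by
        rw [sq] at h4; linarith
      exact le_of_mul_le_mul_right h5 h0
  · intro z
    set w := Rᵀ *ᵥ z with hw
    have h1 : w ⬝ᵥ w = z ⬝ᵥ (R *ᵥ w) := by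
      rw [hw, mulVec_transpose, ← dotProduct_mulVec]
    have h2 : (z ⬝ᵥ (R *ᵥ w))^2 ≤ (z ⬝ᵥ z) * ((R *ᵥ w) ⬝ᵥ (R *ᵥ w)) := cs _ _
    have h3 := hRu w
    rcases eq_or_lt_of_le (dp_self_nonneg w) with h0 | h0
    · rw [← h0]
      exact mul_nonneg hβ (dp_self_nonneg z)
    · have h4 : (w ⬝ᵥ w)^2 ≤ β * (z ⬝ᵥ z) * (w ⬝ᵥ w) := by
        calc (w ⬝ᵥ w)^2 = (z ⬝ᵥ (R *ᵥ w))^2 := by rw [h1]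
          _ ≤ (z ⬝ᵥ z) * ((R *ᵥ w) ⬝ᵥ (R *ᵥ w)) := h2
          _ ≤ (z ⬝ᵥ z) * (β * (w ⬝ᵥ w)) := by
              exact mul_le_mul_of_nonneg_left h3 (dp_self_nonneg _)
          _ = β * (z ⬝ᵥ z) * (w ⬝ᵥ w) := by ring
      have h5 : (w ⬝ᵥ w) * (w ⬝ᵥ w) ≤ (β * (z ⬝ᵥ z)) * (w ⬝ᵥ w) := by
        rw [sq] at h4; linarith
      exact le_of_mul_le_mul_right h5 h0

/-- `‖Xᵀ z‖ ≤ ‖z‖` when `Xᵀ X = 1`. -/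
lemma proj_contract {X : Matrix (Fin a) (Fin b) ℝ} (hX : Xᵀ * X = 1) (z : Fin a → ℝ) :
    (Xᵀ *ᵥ z) ⬝ᵥ (Xᵀ *ᵥ z) ≤ z ⬝ᵥ z := by
  set u := Xᵀ *ᵥ z with hu
  have huu : (X *ᵥ u) ⬝ᵥ (X *ᵥ u) = u ⬝ᵥ u := by
    rw [gramT, hX, one_mulVec]
  have hzu : z ⬝ᵥ (X *ᵥ u) = u ⬝ᵥ u := by
    rw [dotProduct_mulVec, ← mulVec_transpose, ← hu]
  have hw := dp_self_nonneg (z - X *ᵥ u)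
  have hexp : (z - X *ᵥ u) ⬝ᵥ (z - X *ᵥ u)
      = z ⬝ᵥ z - 2 * (z ⬝ᵥ (X *ᵥ u)) + (X *ᵥ u) ⬝ᵥ (X *ᵥ u) := by
    rw [sub_dotProduct, dotProduct_sub, dotProduct_sub]
    rw [dotProduct_comm (X *ᵥ u) z]
    ring
  rw [hexp, huu, hzu] at hw
  linarith

lemma range_mul_congr {m r n k : ℕ} (S : Matrix (Fin r) (Fin m) ℝ)
    (U : Matrix (Fin m) (Fin k) ℝ) (A : Matrix (Fin m) (Fin n) ℝ)
    (h : LinearMap.range U.mulVecLin = LinearMap.range A.mulVecLin) :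
    LinearMap.range (S * U).mulVecLin = LinearMap.range (S * A).mulVecLin := by
  rw [mulVecLin_mul, mulVecLin_mul, LinearMap.range_comp, LinearMap.range_comp, h]

lemma factor {r k : ℕ} (T US : Matrix (Fin r) (Fin k) ℝ) (hUS : USᵀ * US = 1)
    (h : LinearMap.range T.mulVecLin ≤ LinearMap.range US.mulVecLin) :
    T = US * (USᵀ * T) := by
  apply eq_of_mulVec_eq
  intro v
  obtain ⟨c, hc⟩ := h (LinearMap.mem_range_self T.mulVecLin v)
  rw [mulVecLin_apply, mulVecLin_apply] at hc
  rw [← mulVec_mulVec, ← mulVec_mulVec, ← hc, mulVec_mulVec c USᵀ US, hUS, one_mulVec]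

/-- From singular value bounds on `svals`-style hypotheses, obtain bounds on all
eigenvalues of the Gram matrix. -/
lemma eig_bounds_of_sv {r k : ℕ} (X : Matrix (Fin r) (Fin k) ℝ) {ε : ℝ}
    (hε0 : 0 < ε) (hε1 : ε < 1/2)
    (hsv : ∀ i : Fin k, Real.sqrt (1 - ε) ≤ Real.sqrt
        ((Matrix.isHermitian_transpose_mul_self X).eigenvalues
          (Tuple.sort ((Matrix.isHermitian_transpose_mul_self X).eigenvalues) i.rev)) ∧
        Real.sqrt ((Matrix.isHermitian_transpose_mul_self X).eigenvalues
          (Tuple.sort ((Matrix.isHermitian_transpose_mul_self X).eigenvalues) i.rev))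
          ≤ Real.sqrt (1 + ε)) (j : Fin k) :
    1 - ε ≤ (Matrix.isHermitian_transpose_mul_self X).eigenvalues j ∧
    (Matrix.isHermitian_transpose_mul_self X).eigenvalues j ≤ 1 + ε := by
  set hG := Matrix.isHermitian_transpose_mul_self X
  set σ := Tuple.sort hG.eigenvalues with hσ
  have hj : σ ((σ.symm j).rev.rev) = j := by rw [Fin.rev_rev, Equiv.apply_symm_apply]
  have h := hsv (σ.symm j).rev
  rw [hj] at h
  have hnn : 0 ≤ hG.eigenvalues j := Matrix.eigenvalues_conjTranspose_mul_self_nonneg X j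
  have h1ε : (0:ℝ) ≤ 1 - ε := by linarith
  constructor
  · calc 1 - ε = Real.sqrt (1 - ε) ^ 2 := (Real.sq_sqrt h1ε).symm
      _ ≤ Real.sqrt (hG.eigenvalues j) ^ 2 := pow_le_pow_left₀ (Real.sqrt_nonneg _) h.1 2
      _ = hG.eigenvalues j := Real.sq_sqrt hnn
  · calc hG.eigenvalues j = Real.sqrt (hG.eigenvalues j) ^ 2 := (Real.sq_sqrt hnn).symm
      _ ≤ Real.sqrt (1 + ε) ^ 2 := pow_le_pow_left₀ (Real.sqrt_nonneg _) h.2 2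
      _ = 1 + ε := Real.sq_sqrt (by linarith)

end SA


noncomputable def svals {p q : ℕ} (X : Matrix (Fin p) (Fin q) ℝ) : Fin q → ℝ :=
  fun i => Real.sqrt ((Matrix.isHermitian_transpose_mul_self X).eigenvalues
    (Tuple.sort ((Matrix.isHermitian_transpose_mul_self X).eigenvalues) i.rev))

noncomputable def sNorm {p q : ℕ} (X : Matrix (Fin p) (Fin q) ℝ) : ℝ :=
  ⨆ i, svals X i

set_option maxHeartbeats 1000000 in
theorem stmt14 {m n ℓ r p q : ℕ}
    (A : Matrix (Fin m) (Fin n) ℝ) (B : Matrix (Fin m) (Fin ℓ) ℝ)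
    (S : Matrix (Fin r) (Fin m) ℝ)
    (hrSA : (S * A).rank = p) (hrA : A.rank = p)
    (hrSB : (S * B).rank = q) (hrB : B.rank = q)
    (UA : Matrix (Fin m) (Fin p) ℝ) (hUA : UAᵀ * UA = 1)
    (hrUA : LinearMap.range UA.mulVecLin = LinearMap.range A.mulVecLin)
    (UB : Matrix (Fin m) (Fin q) ℝ) (hUB : UBᵀ * UB = 1)
    (hrUB : LinearMap.range UB.mulVecLin = LinearMap.range B.mulVecLin)
    (USA : Matrix (Fin r) (Fin p) ℝ) (hUSA : USAᵀ * USA = 1)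
    (hrUSA : LinearMap.range USA.mulVecLin = LinearMap.range (S * A).mulVecLin)
    (USB : Matrix (Fin r) (Fin q) ℝ) (hUSB : USBᵀ * USB = 1)
    (hrUSB : LinearMap.range USB.mulVecLin = LinearMap.range (S * B).mulVecLin)
    (ε : ℝ) (hε0 : 0 < ε) (hε1 : ε < 1 / 2)
    (hsvA : ∀ i, Real.sqrt (1 - ε) ≤ svals (S * UA) i ∧ svals (S * UA) i ≤ Real.sqrt (1 + ε))
    (hsvB : ∀ i, Real.sqrt (1 - ε) ≤ svals (S * UB) i ∧ svals (S * UB) i ≤ Real.sqrt (1 + ε))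
    (i : Fin q) (hi : (i : ℕ) < min n ℓ) :
    |svals (UAᵀ * Sᵀ * S * UB) i - svals (USAᵀ * USB) i| ≤ 2 * ε * (1 + ε) := by
  classical
  set RA := USAᵀ * (S * UA) with hRAdef
  set RB := USBᵀ * (S * UB) with hRBdef
  set M := USAᵀ * USB with hMdef
  have hrangeA : LinearMap.range (S * UA).mulVecLin ≤ LinearMap.range USA.mulVecLin := by
    rw [SA.range_mul_congr S UA A hrUA, ← hrUSA]
  have hrangeB : LinearMap.range (S * UB).mulVecLin ≤ LinearMap.range USB.mulVecLin := by
    rw [SA.range_mul_congr S UB B hrUB, ← hrUSB]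
  have hSAeq : S * UA = USA * RA := SA.factor _ _ hUSA hrangeA
  have hSBeq : S * UB = USB * RB := SA.factor _ _ hUSB hrangeB
  have hevA := fun j => SA.eig_bounds_of_sv (S * UA) hε0 hε1 hsvA j
  have hevB := fun j => SA.eig_bounds_of_sv (S * UB) hε0 hε1 hsvB j
  have hformA := fun x => SA.form_of_eig_bounds
    (Matrix.isHermitian_transpose_mul_self (S * UA)) _ _ hevA x
  have hformB := fun x => SA.form_of_eig_bounds
    (Matrix.isHermitian_transpose_mul_self (S * UB)) _ _ hevB x
  have hUSAnorm : ∀ c, (USA *ᵥ c) ⬝ᵥ (USA *ᵥ c) = c ⬝ᵥ c := fun c => by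
    rw [SA.gramT, hUSA, one_mulVec]
  have hUSBnorm : ∀ c, (USB *ᵥ c) ⬝ᵥ (USB *ᵥ c) = c ⬝ᵥ c := fun c => by
    rw [SA.gramT, hUSB, one_mulVec]
  have hRAx : ∀ x, (RA *ᵥ x) ⬝ᵥ (RA *ᵥ x) = ((S * UA) *ᵥ x) ⬝ᵥ ((S * UA) *ᵥ x) := by
    intro x
    have h : (S * UA) *ᵥ x = USA *ᵥ (RA *ᵥ x) := by rw [hSAeq, ← mulVec_mulVec]
    rw [h, hUSAnorm]
  have hRBx : ∀ x, (RB *ᵥ x) ⬝ᵥ (RB *ᵥ x) = ((S * UB) *ᵥ x) ⬝ᵥ ((S * UB) *ᵥ x) := by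
    intro x
    have h : (S * UB) *ᵥ x = USB *ᵥ (RB *ᵥ x) := by rw [hSBeq, ← mulVec_mulVec]
    rw [h, hUSBnorm]
  have hRAl : ∀ x, (1 - ε) * (x ⬝ᵥ x) ≤ (RA *ᵥ x) ⬝ᵥ (RA *ᵥ x) := fun x => by
    rw [hRAx x, ← SA.gramH]; exact (hformA x).1
  have hRAu : ∀ x, (RA *ᵥ x) ⬝ᵥ (RA *ᵥ x) ≤ (1 + ε) * (x ⬝ᵥ x) := fun x => by
    rw [hRAx x, ← SA.gramH]; exact (hformA x).2
  have hRBl : ∀ x, (1 - ε) * (x ⬝ᵥ x) ≤ (RB *ᵥ x) ⬝ᵥ (RB *ᵥ x) := fun x => by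
    rw [hRBx x, ← SA.gramH]; exact (hformB x).1
  have hRBu : ∀ x, (RB *ᵥ x) ⬝ᵥ (RB *ᵥ x) ≤ (1 + ε) * (x ⬝ᵥ x) := fun x => by
    rw [hRBx x, ← SA.gramH]; exact (hformB x).2
  obtain ⟨hRATl, hRATu⟩ := SA.transpose_form_bounds (R := RA) (α := 1 - ε) (β := 1 + ε)
    (by linarith) (by linarith) hRAl hRAu
  have hH1 := Matrix.isHermitian_transpose_mul_self (UAᵀ * Sᵀ * S * UB)
  have hH2 := Matrix.isHermitian_transpose_mul_self M
  have hC : UAᵀ * Sᵀ * S * UB = RAᵀ * (M * RB) := by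
    calc UAᵀ * Sᵀ * S * UB = (UAᵀ * Sᵀ) * (S * UB) := by rw [Matrix.mul_assoc]
      _ = (S * UA)ᵀ * (S * UB) := by rw [transpose_mul]
      _ = (USA * RA)ᵀ * (USB * RB) := by rw [← hSAeq, ← hSBeq]
      _ = RAᵀ * USAᵀ * (USB * RB) := by rw [transpose_mul]
      _ = RAᵀ * (M * RB) := by
          rw [Matrix.mul_assoc, hMdef, Matrix.mul_assoc]
  have hCx : ∀ x, (UAᵀ * Sᵀ * S * UB) *ᵥ x = RAᵀ *ᵥ (M *ᵥ (RB *ᵥ x)) := by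
    intro x
    rw [hC, ← mulVec_mulVec, ← mulVec_mulVec]
  have h2nn : ∀ u, 0 ≤ SA.asc hH2 u := fun u =>
    Matrix.eigenvalues_conjTranspose_mul_self_nonneg M _
  have hql : ∀ x, (1 - ε) * ((RB *ᵥ x) ⬝ᵥ ((Mᴴ * M) *ᵥ (RB *ᵥ x)))
      ≤ x ⬝ᵥ (((UAᵀ * Sᵀ * S * UB)ᴴ * (UAᵀ * Sᵀ * S * UB)) *ᵥ x) := by
    intro x
    rw [SA.gramH M, SA.gramH (UAᵀ * Sᵀ * S * UB), hCx x]
    exact hRATl (M *ᵥ (RB *ᵥ x))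
  have hqu : ∀ x, x ⬝ᵥ (((UAᵀ * Sᵀ * S * UB)ᴴ * (UAᵀ * Sᵀ * S * UB)) *ᵥ x)
      ≤ (1 + ε) * ((RB *ᵥ x) ⬝ᵥ ((Mᴴ * M) *ᵥ (RB *ᵥ x))) := by
    intro x
    rw [SA.gramH M, SA.gramH (UAᵀ * Sᵀ * S * UB), hCx x]
    exact hRATu (M *ᵥ (RB *ᵥ x))
  have hsand := SA.asc_sandwich hH1 hH2 h2nn RB (1 - ε) (1 + ε)
    (by linarith) (by linarith) hRBl hRBu hql hqu i.rev
  have hD1 : SA.asc hH2 i.rev ≤ 1 := by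
    refine SA.asc_le_one hH2 (fun x => ?_) i.rev
    rw [← SA.gramT]
    have h1 : M *ᵥ x = USAᵀ *ᵥ (USB *ᵥ x) := by rw [hMdef, ← mulVec_mulVec]
    rw [h1]
    calc (USAᵀ *ᵥ (USB *ᵥ x)) ⬝ᵥ (USAᵀ *ᵥ (USB *ᵥ x))
        ≤ (USB *ᵥ x) ⬝ᵥ (USB *ᵥ x) := SA.proj_contract hUSA _
      _ = x ⬝ᵥ x := hUSBnorm x
  have hs1 : svals (UAᵀ * Sᵀ * S * UB) i = Real.sqrt (SA.asc hH1 i.rev) := rfl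
  have hs2 : svals M i = Real.sqrt (SA.asc hH2 i.rev) := rfl
  have hc0 : 0 ≤ SA.asc hH1 i.rev :=
    Matrix.eigenvalues_conjTranspose_mul_self_nonneg (UAᵀ * Sᵀ * S * UB) _
  have hd0 : 0 ≤ SA.asc hH2 i.rev := h2nn i.rev
  have hsl : (1 - ε) * (1 - ε) * SA.asc hH2 i.rev ≤ SA.asc hH1 i.rev := hsand.1
  have hsu : SA.asc hH1 i.rev ≤ (1 + ε) * (1 + ε) * SA.asc hH2 i.rev := hsand.2
  clear hsand
  set d := SA.asc hH2 i.rev with hddef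
  set c := SA.asc hH1 i.rev with hcdef
  clear_value c d
  rw [hs1, hs2, abs_le]
  have hsd : Real.sqrt d ≤ 1 := Real.sqrt_le_one.mpr hD1
  have hup : Real.sqrt c ≤ (1 + ε) * Real.sqrt d := by
    have h' : c ≤ (1 + ε)^2 * d := by nlinarith [hsu]
    calc Real.sqrt c ≤ Real.sqrt ((1 + ε)^2 * d) := Real.sqrt_le_sqrt h'
      _ = (1 + ε) * Real.sqrt d := by
          rw [Real.sqrt_mul (sq_nonneg _), Real.sqrt_sq (by linarith : (0:ℝ) ≤ 1 + ε)]
  have hlo : (1 - ε) * Real.sqrt d ≤ Real.sqrt c := by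
    have h' : (1 - ε)^2 * d ≤ c := by nlinarith [hsl]
    calc (1 - ε) * Real.sqrt d = Real.sqrt ((1 - ε)^2 * d) := by
          rw [Real.sqrt_mul (sq_nonneg _), Real.sqrt_sq (by linarith : (0:ℝ) ≤ 1 - ε)]
      _ ≤ Real.sqrt c := Real.sqrt_le_sqrt h'
  have hsdnn := Real.sqrt_nonneg d
  constructor
  · nlinarith [hup, hlo, hsd, hsdnn, hε0.le]
  · nlinarith [hup, hlo, hsd, hsdnn, hε0.le]
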